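/- Let C ⊆ L(V) be a convex set of endomorphisms of a finite-dimensional vector space containing some Z with squarefree characteristic polynomial. Then the set of diagonalizable elements of C is dense in C. -/

import Mathlib

open Polynomial

/-- Every root of the characteristic polynomial of an endomorphism of a
finite-dimensional complex vector space is an eigenvalue. -/
lemma exists_eigenvector_of_charpoly_root {V : Type*} [AddCommGroup V] [Module ℂ V]
    [FiniteDimensional ℂ V] (f : Module.End ℂ V) {μ : ℂ}
    (h : (LinearMap.charpoly f).eval μ = 0) : ∃ v : V, v ≠ 0 ∧ f v = μ • v := by
  classical
  set b : Module.Basis (Fin (Module.finrank ℂ V)) ℂ V := Module.finBasis ℂ V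
  set M : Matrix (Fin (Module.finrank ℂ V)) (Fin (Module.finrank ℂ V)) ℂ :=
    LinearMap.toMatrix b b f with hM
  have hchar : M.charpoly = LinearMap.charpoly f := LinearMap.charpoly_toMatrix f b
  have h1 : M.charpoly.eval μ = 0 := by rw [hchar]; exact h
  have h2 : ((Matrix.charmatrix M).map (evalRingHom μ)).det = 0 := by
    rw [← RingHom.mapMatrix_apply, ← RingHom.map_det]
    simpa [Matrix.charpoly] using h1
  have hRHS : LinearMap.toMatrix b b (μ • (1 : Module.End ℂ V) - f)
      = μ • 1 - M := by
    rw [map_sub, map_smul, LinearMap.toMatrix_one]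
  have h3 : (Matrix.charmatrix M).map (evalRingHom μ) = μ • 1 - M := by
    ext i j
    by_cases hij : i = j
    · subst hij
      simp [Matrix.charmatrix_apply_eq, Matrix.smul_apply, Matrix.one_apply_eq]
    · simp [Matrix.charmatrix_apply_ne _ _ _ hij, Matrix.one_apply_ne hij, hij]
  have h4 : LinearMap.det (μ • (1 : Module.End ℂ V) - f) = 0 := by
    rw [← LinearMap.det_toMatrix b, hRHS, ← h3]
    exact h2
  have h5 := LinearMap.bot_lt_ker_of_det_eq_zero h4
  obtain ⟨v, hv, hv0⟩ := (Submodule.ne_bot_iff _).mp h5.ne'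
  refine ⟨v, hv0, ?_⟩
  have h6 := LinearMap.mem_ker.mp hv
  have h7 : μ • v - f v = 0 := by simpa using h6
  exact (sub_eq_zero.mp h7).symm

/-- An endomorphism of a finite-dimensional complex vector space with squarefree
characteristic polynomial admits an eigenbasis. -/
lemma eigenbasis_of_squarefree_charpoly {V : Type*} [AddCommGroup V] [Module ℂ V]
    [FiniteDimensional ℂ V] (f : Module.End ℂ V)
    (hsq : Squarefree (LinearMap.charpoly f)) :
    ∃ (b : Module.Basis (Fin (Module.finrank ℂ V)) ℂ V) (μ : Fin (Module.finrank ℂ V) → ℂ),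
      ∀ i, f (b i) = μ i • b i := by
  classical
  set n := Module.finrank ℂ V with hn
  set p := LinearMap.charpoly f with hp
  by_cases h0 : n = 0
  · haveI : Subsingleton V := Module.finrank_zero_iff.mp h0
    haveI : IsEmpty (Fin n) := by rw [h0]; infer_instance
    exact ⟨Module.Basis.empty V, fun i => 0, fun i => isEmptyElim i⟩
  have hmonic : p.Monic := LinearMap.charpoly_monic f
  have hdeg : p.natDegree = n := LinearMap.charpoly_natDegree f
  have hsplits : p.Splits := IsAlgClosed.splits p
  have hsep : p.Separable := (PerfectField.separable_iff_squarefree).mpr hsq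
  have hnodup : p.roots.Nodup := nodup_roots hsep
  have hcard : Multiset.card p.roots = n := by
    rw [splits_iff_card_roots.mp hsplits, hdeg]
  have hcard' : p.roots.toFinset.card = n := by
    rw [Multiset.toFinset_card_of_nodup hnodup, hcard]
  set ι := {μ : ℂ // μ ∈ p.roots.toFinset}
  have hfc : Fintype.card ι = n := by
    rw [Fintype.card_coe, hcard']
  have hroot : ∀ μ : ι, p.eval (μ : ℂ) = 0 := by
    intro μ
    have := μ.2
    rw [Multiset.mem_toFinset, mem_roots hmonic.ne_zero] at this
    exact this
  choose v hv0 hveq using fun μ : ι => exists_eigenvector_of_charpoly_root f (hroot μ)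
  have hli : LinearIndependent ℂ v := by
    refine f.eigenvectors_linearIndependent' (fun μ : ι => (μ : ℂ)) Subtype.coe_injective v
      (fun μ => ⟨?_, hv0 μ⟩)
    exact Module.End.mem_eigenspace_iff.mpr (hveq μ)
  haveI : Nonempty ι := Fintype.card_pos_iff.mp (by omega)
  let b0 : Module.Basis ι ℂ V := basisOfLinearIndependentOfCardEqFinrank hli (by rw [hfc])
  have hb0 : ⇑b0 = v := coe_basisOfLinearIndependentOfCardEqFinrank hli _
  let e : ι ≃ Fin n := Fintype.equivFinOfCardEq hfc
  refine ⟨b0.reindex e, fun i => ((e.symm i : ι) : ℂ), fun i => ?_⟩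
  rw [Module.Basis.reindex_apply, hb0]
  exact hveq (e.symm i)

/-- If a monic polynomial over `ℂ[t]` specializes to a squarefree polynomial at some
point, then there is a nonzero `d : ℂ[t]` such that the specialization at any `t` with
`d.eval t ≠ 0` is squarefree. -/
lemma generic_squarefree (P : Polynomial (Polynomial ℂ)) (hP : P.Monic) (c : ℂ)
    (hc : Squarefree (P.map (evalRingHom c))) :
    ∃ d : Polynomial ℂ, d ≠ 0 ∧
      ∀ t : ℂ, d.eval t ≠ 0 → Squarefree (P.map (evalRingHom t)) := by
  classical
  let F := FractionRing (Polynomial ℂ)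
  let alg : Polynomial ℂ →+* F := algebraMap (Polynomial ℂ) F
  have hinj : Function.Injective alg := IsFractionRing.injective (Polynomial ℂ) F
  have hmapinj : Function.Injective (Polynomial.map alg) :=
    Polynomial.map_injective alg hinj
  have hPmmonic : (P.map alg).Monic := hP.map alg
  -- Step 1: `P.map alg` is squarefree.
  have hsqf : Squarefree (P.map alg) := by
    intro x hx2
    by_contra hxu
    have hx0 : x ≠ 0 := by
      rintro rfl
      rw [mul_zero, zero_dvd_iff] at hx2
      exact hPmmonic.ne_zero hx2
    have hlc : x.leadingCoeff ≠ 0 := leadingCoeff_ne_zero.mpr hx0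
    set g : F[X] := x * C x.leadingCoeff⁻¹ with hg
    have hgmonic : g.Monic := monic_mul_leadingCoeff_inv hx0
    have hu : IsUnit (C x.leadingCoeff⁻¹ * C x.leadingCoeff⁻¹) :=
      ((isUnit_C.mpr (inv_ne_zero hlc).isUnit).mul (isUnit_C.mpr (inv_ne_zero hlc).isUnit))
    have hgg : g * g ∣ P.map alg := by
      rw [show g * g = x * x * (C x.leadingCoeff⁻¹ * C x.leadingCoeff⁻¹) from by rw [hg]; ring,
        hu.mul_right_dvd]
      exact hx2
    obtain ⟨bq, hbq⟩ := hgg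
    have hbqmonic : bq.Monic := by
      have h1 : (g * g * bq).leadingCoeff = 1 := by rw [← hbq]; exact hPmmonic
      rwa [leadingCoeff_mul, leadingCoeff_mul, hgmonic.leadingCoeff, one_mul, one_mul] at h1
    have hgdvd : g ∣ P.map alg := ⟨g * bq, by rw [hbq]; ring⟩
    have hbqdvd : bq ∣ P.map alg := ⟨g * g, by rw [hbq]; ring⟩
    obtain ⟨g', hg'⟩ := IsIntegrallyClosed.eq_map_mul_C_of_dvd (K := F) hP hgdvd
    rw [hgmonic.leadingCoeff, C_1, mul_one] at hg'
    obtain ⟨b', hb'⟩ := IsIntegrallyClosed.eq_map_mul_C_of_dvd (K := F) hP hbqdvd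
    rw [hbqmonic.leadingCoeff, C_1, mul_one] at hb'
    have hfact : P = g' * g' * b' := by
      apply hmapinj
      rw [Polynomial.map_mul, Polynomial.map_mul, hg', hb', ← hbq]
    have hg'monic : g'.Monic := monic_of_injective hinj (hg' ▸ hgmonic)
    have hg'deg : g'.natDegree ≠ 0 := by
      intro hdeg0
      have hone : g' = 1 := hg'monic.natDegree_eq_zero.mp hdeg0
      rw [hone, Polynomial.map_one] at hg'
      apply hxu
      have hxeq : x = C x.leadingCoeff := by
        have h1 : x * C x.leadingCoeff⁻¹ = 1 := by rw [← hg, ← hg']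
        calc x = x * C x.leadingCoeff⁻¹ * C x.leadingCoeff := by
              rw [mul_assoc, ← C_mul, inv_mul_cancel₀ hlc, C_1, mul_one]
          _ = C x.leadingCoeff := by rw [h1, one_mul]
      rw [hxeq]
      exact isUnit_C.mpr hlc.isUnit
    have hdvd : (g'.map (evalRingHom c)) * (g'.map (evalRingHom c)) ∣ P.map (evalRingHom c) := by
      refine ⟨b'.map (evalRingHom c), ?_⟩
      rw [← Polynomial.map_mul, ← Polynomial.map_mul, ← hfact]
    have hunit := hc _ hdvd
    have hone : g'.map (evalRingHom c) = 1 :=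
      (hg'monic.map (evalRingHom c)).eq_one_of_isUnit hunit
    have hdm : (g'.map (evalRingHom c)).natDegree = g'.natDegree :=
      hg'monic.natDegree_map _
    rw [hone, natDegree_one] at hdm
    exact hg'deg hdm.symm
  -- Step 2: separability and coprimality over the fraction field.
  have hsep : (P.map alg).Separable := (PerfectField.separable_iff_squarefree).mpr hsqf
  obtain ⟨u, w, huw⟩ := hsep
  -- Step 3: clear denominators.
  obtain ⟨bu, hbu⟩ :=
    IsLocalization.integerNormalization_map_to_map (nonZeroDivisors (Polynomial ℂ)) u
  obtain ⟨bw, hbw⟩ :=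
    IsLocalization.integerNormalization_map_to_map (nonZeroDivisors (Polynomial ℂ)) w
  set U : (Polynomial ℂ)[X] :=
    IsLocalization.integerNormalization (nonZeroDivisors (Polynomial ℂ)) u with hU
  set W : (Polynomial ℂ)[X] :=
    IsLocalization.integerNormalization (nonZeroDivisors (Polynomial ℂ)) w with hW
  set d : Polynomial ℂ := (bu : Polynomial ℂ) * (bw : Polynomial ℂ) with hd
  have hd0 : d ≠ 0 := mul_ne_zero (nonZeroDivisors.coe_ne_zero bu) (nonZeroDivisors.coe_ne_zero bw)
  have hE : C (bw : Polynomial ℂ) * U * P + C (bu : Polynomial ℂ) * W * P.derivative = C d := by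
    apply hmapinj
    rw [Polynomial.map_add, Polynomial.map_mul, Polynomial.map_mul, Polynomial.map_mul,
      Polynomial.map_mul, Polynomial.map_C, Polynomial.map_C, Polynomial.map_C, hbu, hbw]
    have hsmul : ∀ (r : Polynomial ℂ) (q : F[X]), r • q = C (alg r) * q := by
      intro r q
      rw [← algebraMap_smul F r q, Polynomial.smul_eq_C_mul]
    rw [hsmul, hsmul, ← derivative_map]
    calc C (alg (bw : Polynomial ℂ)) * (C (alg (bu : Polynomial ℂ)) * u) * P.map alg
          + C (alg (bu : Polynomial ℂ)) * (C (alg (bw : Polynomial ℂ)) * w) * (P.map alg).derivative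
        = C (alg (bu : Polynomial ℂ)) * C (alg (bw : Polynomial ℂ))
            * (u * P.map alg + w * (P.map alg).derivative) := by ring
      _ = C (alg d) := by rw [huw, mul_one, hd, map_mul, C_mul]
  refine ⟨d, hd0, fun t ht => ?_⟩
  -- Step 4: specialize.
  have hEt := congrArg (Polynomial.map (evalRingHom t)) hE
  rw [Polynomial.map_add, Polynomial.map_mul, Polynomial.map_mul, Polynomial.map_mul,
    Polynomial.map_mul, Polynomial.map_C, Polynomial.map_C, Polynomial.map_C,
    ← derivative_map] at hEt
  have hcop : IsCoprime (P.map (evalRingHom t)) (P.map (evalRingHom t)).derivative := by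
    refine ⟨C (d.eval t)⁻¹ * (C (evalRingHom t (bw : Polynomial ℂ)) * U.map (evalRingHom t)),
      C (d.eval t)⁻¹ * (C (evalRingHom t (bu : Polynomial ℂ)) * W.map (evalRingHom t)), ?_⟩
    have h1 : C (d.eval t)⁻¹ * (C (evalRingHom t (bw : Polynomial ℂ)) * U.map (evalRingHom t)
          * P.map (evalRingHom t)
        + C (evalRingHom t (bu : Polynomial ℂ)) * W.map (evalRingHom t)
          * (P.map (evalRingHom t)).derivative) = 1 := by
      rw [hEt, show evalRingHom t d = d.eval t from rfl, ← C_mul, inv_mul_cancel₀ ht, C_1]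
    rw [← h1]
    ring
  exact Separable.squarefree hcop

/-- If a convex set `C` of endomorphisms of a finite-dimensional space contains an element
with squarefree characteristic polynomial, then the diagonalizable elements of `C`
(those admitting an eigenbasis) are dense in `C`. -/
theorem stmt_14 {V : Type*} [NormedAddCommGroup V] [NormedSpace ℂ V]
    [FiniteDimensional ℂ V]
    (C : Set (V →L[ℂ] V)) (hconv : Convex ℝ C)
    (Z : V →L[ℂ] V) (hZ : Z ∈ C)
    (hZsimple : Squarefree (LinearMap.charpoly (Z : V →ₗ[ℂ] V))) :
    ∀ X ∈ C, ∀ ε : ℝ, 0 < ε → ∃ Y ∈ C, ‖X - Y‖ < ε ∧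
      ∃ (b : Module.Basis (Fin (Module.finrank ℂ V)) ℂ V) (μ : Fin (Module.finrank ℂ V) → ℂ),
        ∀ i, Y (b i) = μ i • b i := by
  classical
  intro X hX ε hε
  set n := Module.finrank ℂ V
  set b0 : Module.Basis (Fin n) ℂ V := Module.finBasis ℂ V
  set Xm := LinearMap.toMatrix b0 b0 (X : V →ₗ[ℂ] V) with hXm
  set Zm := LinearMap.toMatrix b0 b0 (Z : V →ₗ[ℂ] V) with hZm
  set Mpoly : Matrix (Fin n) (Fin n) (Polynomial ℂ) :=
    Matrix.of fun i j => Polynomial.C (Xm i j) + Polynomial.X * Polynomial.C (Zm i j - Xm i j)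
    with hMpoly
  set P := Mpoly.charpoly with hPdef
  have hPmonic : P.Monic := Mpoly.charpoly_monic
  -- the family of linear maps
  set W : ℂ → (V →ₗ[ℂ] V) := fun t => (X : V →ₗ[ℂ] V) + t • ((Z : V →ₗ[ℂ] V) - (X : V →ₗ[ℂ] V))
    with hWdef
  have hWmat : ∀ t : ℂ, LinearMap.toMatrix b0 b0 (W t) = Mpoly.map (evalRingHom t) := by
    intro t
    ext i j
    rw [hWdef]
    simp only [map_add, map_smul, map_sub]
    rw [Matrix.map_apply, hMpoly]
    simp [Matrix.add_apply, Matrix.smul_apply, Matrix.sub_apply, smul_eq_mul]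
    rfl
  have hWchar : ∀ t : ℂ, LinearMap.charpoly (W t) = P.map (evalRingHom t) := by
    intro t
    rw [← LinearMap.charpoly_toMatrix (W t) b0, hWmat t, hPdef, Matrix.charpoly_map]
  have hW1 : W 1 = (Z : V →ₗ[ℂ] V) := by
    rw [hWdef]
    simp
  have hc : Squarefree (P.map (evalRingHom 1)) := by
    rw [← hWchar 1, hW1]
    exact hZsimple
  obtain ⟨d, hd0, hd⟩ := generic_squarefree P hPmonic 1 hc
  -- choose the parameter τ
  set m : ℝ := min 1 (ε / (‖X - Z‖ + 1)) with hm
  have hm0 : 0 < m := by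
    apply lt_min one_pos
    positivity
  set S : Set ℝ := {τ : ℝ | d.eval (τ : ℂ) = 0} with hS
  have hSfin : S.Finite := by
    have h1 : S ⊆ (fun τ : ℝ => (τ : ℂ)) ⁻¹' {z : ℂ | d.IsRoot z} := fun τ hτ => hτ
    refine Set.Finite.subset ?_ h1
    exact Set.Finite.preimage (Set.injOn_of_injective Complex.ofReal_injective)
      (Polynomial.finite_setOf_isRoot hd0)
  obtain ⟨τ, hτ⟩ := ((Set.Ioo_infinite hm0).diff hSfin).nonempty
  obtain ⟨⟨hτ0, hτm⟩, hτS⟩ := hτ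
  have hτ1 : τ < 1 := lt_of_lt_of_le hτm (min_le_left _ _)
  have hτε : τ * (‖X - Z‖ + 1) < ε := by
    have h1 : τ < ε / (‖X - Z‖ + 1) := lt_of_lt_of_le hτm (min_le_right _ _)
    have h2 : (0:ℝ) < ‖X - Z‖ + 1 := by positivity
    calc τ * (‖X - Z‖ + 1) < ε / (‖X - Z‖ + 1) * (‖X - Z‖ + 1) :=
          mul_lt_mul_of_pos_right h1 h2
      _ = ε := div_mul_cancel₀ ε h2.ne'
  -- the approximant
  set Y : V →L[ℂ] V := (1 - τ) • X + τ • Z with hY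
  have hYC : Y ∈ C := hconv hX hZ (by linarith) (le_of_lt hτ0) (by ring)
  have hXY : X - Y = τ • (X - Z) := by
    rw [hY]
    module
  have hnorm : ‖X - Y‖ < ε := by
    rw [hXY, norm_smul τ (X - Z)]
    have habs : ‖(τ:ℝ)‖ = τ := abs_of_pos hτ0
    rw [habs]
    nlinarith [norm_nonneg (X - Z)]
  -- Y corresponds to W τ
  have hYW : (Y : V →ₗ[ℂ] V) = W ((τ : ℝ) : ℂ) := by
    apply LinearMap.ext
    intro v
    rw [hY, hWdef]
    simp only [ContinuousLinearMap.coe_add, ContinuousLinearMap.coe_smul,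
      LinearMap.add_apply, LinearMap.smul_apply, LinearMap.sub_apply,
      ContinuousLinearMap.coe_coe]
    have hsm : ∀ (a : ℝ) (x : V), a • x = ((a : ℂ)) • x := by
      intro a x
      rw [← algebraMap_smul ℂ a x, Complex.coe_algebraMap]
    rw [hsm (1 - τ) (X v), hsm τ (Z v)]
    push_cast
    module
  have hsqY : Squarefree (LinearMap.charpoly (Y : V →ₗ[ℂ] V)) := by
    rw [hYW, hWchar]
    exact hd _ (fun h => hτS h)
  obtain ⟨b, μ, hb⟩ := eigenbasis_of_squarefree_charpoly (Y : V →ₗ[ℂ] V) hsqY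
  exact ⟨Y, hYC, hnorm, b, μ, fun i => hb i⟩
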